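/- The operator G satisfies G(1) = b and G(a·v) = (1/2)·ω(a·v·b) for every ab-polynomial v. -/

import Mathlib

open scoped TensorProduct
open scoped Classical

noncomputable section

abbrev Alg : Type := MonoidAlgebra ℤ (FreeMonoid Bool)

def va : Alg := MonoidAlgebra.of ℤ (FreeMonoid Bool) (FreeMonoid.of false)
def vb : Alg := MonoidAlgebra.of ℤ (FreeMonoid Bool) (FreeMonoid.of true)

def monoOf (l : List Bool) : Alg := MonoidAlgebra.of ℤ (FreeMonoid Bool) (FreeMonoid.ofList l)

def toF (x : Alg) : FreeMonoid Bool →₀ ℤ := x.coeff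

/-- The weight of a chain encoded as a strictly increasing map `f : Fin (k+1) → P`. -/
def wtChain {P : Type} (ρ : P → ℕ) {k : ℕ} (f : Fin (k+1) → P) : Alg :=
  (List.ofFn (fun i : Fin k =>
    (va - vb) ^ (ρ (f i.succ) - ρ (f i.castSucc) - 1) *
      (if (i : ℕ) + 1 < k then vb else 1))).prod

def zetaChain {P : Type} (zb : P → P → ℤ) {k : ℕ} (f : Fin (k+1) → P) : ℤ :=
  ∏ i : Fin k, zb (f i.castSucc) (f i.succ)

/-- The ab-index of the interval `[lo, hi]` of a quasi-graded poset `(P, ρ, zb)`. -/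
def PsiI {P : Type} [Fintype P] [PartialOrder P] (ρ : P → ℕ) (zb : P → P → ℤ)
    (lo hi : P) : Alg :=
  ∑ k ∈ Finset.range (Fintype.card P + 1),
    ∑ f : Fin (k+1) → P,
      if StrictMono f ∧ f 0 = lo ∧ f (Fin.last k) = hi
      then zetaChain zb f • wtChain ρ f else 0

/-- The algebra map `κ` with `κ(a) = a - b`, `κ(b) = 0`. -/
def kappa : Alg →ₐ[ℤ] Alg :=
  MonoidAlgebra.lift ℤ Alg (FreeMonoid Bool)
    (FreeMonoid.lift (fun s => if s then 0 else va - vb))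

/-- The algebra map `λ̄` with `λ̄(a) = 0`, `λ̄(b) = a - b`. -/
def lambdabar : Alg →ₐ[ℤ] Alg :=
  MonoidAlgebra.lift ℤ Alg (FreeMonoid Bool)
    (FreeMonoid.lift (fun s => if s then va - vb else 0))

/-- `η` on monomials: `b^m a^k ↦ 2 (a-b)^(m+k)`, other monomials to `0`. -/
def etaMon (w : FreeMonoid Bool) : Alg :=
  if ∃ m k : ℕ, FreeMonoid.toList w = List.replicate m true ++ List.replicate k false
  then (2 : ℤ) • (va - vb) ^ (FreeMonoid.toList w).length else 0

def etaOp (x : Alg) : Alg := (toF x).sum fun w c => c • etaMon w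

/-- The letter-deletion coproduct on `Z⟨a,b⟩`. -/
def Delta (x : Alg) : Alg ⊗[ℤ] Alg :=
  (toF x).sum fun w c => c •
    ∑ i ∈ Finset.range (FreeMonoid.toList w).length,
      monoOf ((FreeMonoid.toList w).take i) ⊗ₜ[ℤ] monoOf ((FreeMonoid.toList w).drop (i+1))

/-- The Sweedler-style convolution `x ↦ Σ F(x₍₁₎) · b · G(x₍₂₎)`. -/
def sweedler (F G : Alg → Alg) (x : Alg) : Alg :=
  (toF x).sum fun w c => c •
    ∑ i ∈ Finset.range (FreeMonoid.toList w).length,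
      F (monoOf ((FreeMonoid.toList w).take i)) * vb *
        G (monoOf ((FreeMonoid.toList w).drop (i+1)))

/-- `phiAux n = φ_{n+1}`, defined by `φ₁ = κ` and `φ_{k+1}(w) = Σ φ_k(w₍₁₎) · b · η(w₍₂₎)`. -/
def phiAux : ℕ → Alg → Alg
  | 0 => fun x => kappa x
  | (n+1) => fun x => sweedler (phiAux n) etaOp x

def maxLen (x : Alg) : ℕ := (toF x).support.sup fun w => (FreeMonoid.toList w).length

/-- The operator `φ = Σ_{k ≥ 1} φ_k` (the sum is finite on any given polynomial). -/
def phi (x : Alg) : Alg := ∑ k ∈ Finset.range (maxLen x + 1), phiAux k x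

/-- `ω` on a monomial: replace each occurrence of `ab` by `2d` and remaining letters by `c`. -/
def omegaList : List Bool → Alg
  | [] => 1
  | false :: true :: rest => ((2:ℤ) • (va * vb + vb * va)) * omegaList rest
  | _ :: rest => (va + vb) * omegaList rest

def omegaOp (x : Alg) : Alg := (toF x).sum fun w c => c • omegaList (FreeMonoid.toList w)

/-- The operator `G(w) = φ(w)·b + Σ φ(w₍₁₎)·b·λ̄(w₍₂₎)·(a-b)`. -/
def Gop (w : Alg) : Alg := phi w * vb + sweedler phi (fun y => lambdabar y) w * (va - vb)

/-- The reversal map `u ↦ u*` reading each monomial backwards. -/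
def revOp (x : Alg) : Alg :=
  (toF x).sum fun w c =>
    MonoidAlgebra.single (FreeMonoid.ofList (FreeMonoid.toList w).reverse) c

/-- `H'` deletes the last letter of each monomial, `H'(1) = 0`. -/
def Hp (x : Alg) : Alg :=
  (toF x).sum fun w c => if w = 1 then 0 else c • monoOf ((FreeMonoid.toList w).dropLast)

end
noncomputable section

-- ============ basics ============

lemma monoOf_def (l : List Bool) : monoOf l = MonoidAlgebra.single (FreeMonoid.ofList l) 1 := rfl

lemma toF_mono (l : List Bool) : toF (monoOf l) = Finsupp.single (FreeMonoid.ofList l) 1 := rfl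

lemma monoOf_nil : monoOf [] = 1 := rfl

lemma monoOf_append (l l' : List Bool) : monoOf (l ++ l') = monoOf l * monoOf l' := by
  rw [monoOf_def, monoOf_def, monoOf_def, MonoidAlgebra.single_mul_single, one_mul]
  rfl

lemma toList_ofList (l : List Bool) : FreeMonoid.toList (FreeMonoid.ofList l) = l := rfl

lemma sweedler_mono (F G : Alg → Alg) (l : List Bool) :
    sweedler F G (monoOf l) =
      ∑ i ∈ Finset.range l.length,
        F (monoOf (l.take i)) * vb * G (monoOf (l.drop (i+1))) := by
  rw [sweedler, toF_mono, Finsupp.sum_single_index (by simp), one_smul]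
  rfl

lemma etaOp_mono (l : List Bool) : etaOp (monoOf l) = etaMon (FreeMonoid.ofList l) := by
  rw [etaOp, toF_mono, Finsupp.sum_single_index (by simp), one_smul]

lemma kappa_mono_append (l : List Bool) (x : Bool) :
    kappa (monoOf (l ++ [x])) = kappa (monoOf l) * (if x then 0 else va - vb) := by
  rw [monoOf_append, map_mul]
  congr 1
  show kappa (MonoidAlgebra.single (FreeMonoid.of x) 1) = _
  rw [kappa, MonoidAlgebra.lift_single, one_smul, FreeMonoid.lift_eval_of]

lemma lambdabar_mono_append (l : List Bool) (x : Bool) :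
    lambdabar (monoOf (l ++ [x])) = lambdabar (monoOf l) * (if x then va - vb else 0) := by
  rw [monoOf_append, map_mul]
  congr 1
  show lambdabar (MonoidAlgebra.single (FreeMonoid.of x) 1) = _
  rw [lambdabar, MonoidAlgebra.lift_single, one_smul, FreeMonoid.lift_eval_of]

lemma kappa_one : kappa (monoOf []) = 1 := by rw [monoOf_nil, map_one]

lemma lambdabar_one : lambdabar (monoOf []) = 1 := by rw [monoOf_nil, map_one]


def etabMon (w : FreeMonoid Bool) : Alg :=
  if ∃ m : ℕ, FreeMonoid.toList w = List.replicate m true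
  then (2 : ℤ) • (va - vb) ^ (FreeMonoid.toList w).length else 0

def etabOp (x : Alg) : Alg := (toF x).sum fun w c => c • etabMon w

lemma etabOp_mono (l : List Bool) : etabOp (monoOf l) = etabMon (FreeMonoid.ofList l) := by
  rw [etabOp, toF_mono, Finsupp.sum_single_index (by simp), one_smul]

lemma concat_inj {α : Type*} {l₁ l₂ : List α} {x y : α} (h : l₁ ++ [x] = l₂ ++ [y]) :
    l₁ = l₂ ∧ x = y := by
  obtain ⟨h1, h2⟩ := List.append_inj' h rfl
  exact ⟨h1, by simpa using h2⟩

lemma cond1 (v : List Bool) :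
    (∃ m k : ℕ, (v ++ [false]) = List.replicate m true ++ List.replicate k false) ↔
    (∃ m k : ℕ, v = List.replicate m true ++ List.replicate k false) := by
  constructor
  · rintro ⟨m, k, h⟩
    rcases k with _ | k
    · simp only [List.replicate_zero, List.append_nil] at h
      have : false = true := List.eq_of_mem_replicate (h ▸ (by simp : false ∈ v ++ [false]))
      simp at this
    · rw [List.replicate_succ' , ← List.append_assoc] at h
      obtain ⟨h1, _⟩ := concat_inj h
      exact ⟨m, k, h1⟩
  · rintro ⟨m, k, h⟩
    exact ⟨m, k + 1, by rw [h, List.replicate_succ', List.append_assoc]⟩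

lemma cond2 (v : List Bool) :
    (∃ m k : ℕ, (v ++ [true]) = List.replicate m true ++ List.replicate k false) ↔
    (∃ m : ℕ, v = List.replicate m true) := by
  constructor
  · rintro ⟨m, k, h⟩
    rcases k with _ | k
    · simp only [List.replicate_zero, List.append_nil] at h
      rcases m with _ | m
      · simp at h
      · rw [List.replicate_succ'] at h
        obtain ⟨h1, _⟩ := concat_inj h
        exact ⟨m, h1⟩
    · rw [List.replicate_succ', ← List.append_assoc] at h
      obtain ⟨_, h2⟩ := concat_inj h
      simp at h2
  · rintro ⟨m, h⟩
    exact ⟨m + 1, 0, by rw [h, List.replicate_succ']; simp⟩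

lemma cond3 (v : List Bool) :
    (∃ m : ℕ, (v ++ [true]) = List.replicate m true) ↔ (∃ m : ℕ, v = List.replicate m true) := by
  constructor
  · rintro ⟨m, h⟩
    rcases m with _ | m
    · simp at h
    · rw [List.replicate_succ'] at h
      exact ⟨m, (concat_inj h).1⟩
  · rintro ⟨m, h⟩
    exact ⟨m + 1, by rw [h, List.replicate_succ']⟩

lemma cond4 (v : List Bool) : ¬ ∃ m : ℕ, (v ++ [false]) = List.replicate m true := by
  rintro ⟨m, h⟩
  have : false = true := List.eq_of_mem_replicate (h ▸ (by simp : false ∈ v ++ [false]))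
  simp at this

lemma eta_nil : etaMon (FreeMonoid.ofList []) = (2:ℤ) • (1:Alg) := by
  rw [etaMon, if_pos ⟨0, 0, rfl⟩]; simp

lemma etab_nil : etabMon (FreeMonoid.ofList []) = (2:ℤ) • (1:Alg) := by
  rw [etabMon, if_pos ⟨0, rfl⟩]; simp

lemma eta_append_a (v : List Bool) :
    etaMon (FreeMonoid.ofList (v ++ [false])) = etaMon (FreeMonoid.ofList v) * (va - vb) := by
  rw [etaMon, etaMon, toList_ofList, toList_ofList]
  by_cases h : ∃ m k : ℕ, v = List.replicate m true ++ List.replicate k false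
  · rw [if_pos ((cond1 v).2 h), if_pos h, List.length_append, List.length_singleton,
      pow_succ, smul_mul_assoc]
  · rw [if_neg (fun hc => h ((cond1 v).1 hc)), if_neg h, zero_mul]

lemma eta_append_b (v : List Bool) :
    etaMon (FreeMonoid.ofList (v ++ [true])) = etabMon (FreeMonoid.ofList v) * (va - vb) := by
  rw [etaMon, etabMon, toList_ofList, toList_ofList]
  by_cases h : ∃ m : ℕ, v = List.replicate m true
  · rw [if_pos ((cond2 v).2 h), if_pos h, List.length_append, List.length_singleton,
      pow_succ, smul_mul_assoc]
  · rw [if_neg (fun hc => h ((cond2 v).1 hc)), if_neg h, zero_mul]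

lemma etab_append_b (v : List Bool) :
    etabMon (FreeMonoid.ofList (v ++ [true])) = etabMon (FreeMonoid.ofList v) * (va - vb) := by
  rw [etabMon, etabMon, toList_ofList, toList_ofList]
  by_cases h : ∃ m : ℕ, v = List.replicate m true
  · rw [if_pos ((cond3 v).2 h), if_pos h, List.length_append, List.length_singleton,
      pow_succ, smul_mul_assoc]
  · rw [if_neg (fun hc => h ((cond3 v).1 hc)), if_neg h, zero_mul]

lemma etab_append_a (v : List Bool) :
    etabMon (FreeMonoid.ofList (v ++ [false])) = 0 := by
  rw [etabMon, toList_ofList, if_neg (cond4 v)]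

-- ============ vanishing ============

lemma phiAux_succ (n : ℕ) (x : Alg) : phiAux (n+1) x = sweedler (phiAux n) etaOp x := rfl

lemma phiAux_zero (x : Alg) : phiAux 0 x = kappa x := rfl

lemma length_take_lt {u : List Bool} {i : ℕ} (h : i < u.length) : (u.take i).length = i := by
  simp [List.length_take, Nat.min_eq_left (le_of_lt h)]

lemma phiAux_mono_vanish : ∀ n : ℕ, ∀ l : List Bool, l.length < n → phiAux n (monoOf l) = 0 := by
  intro n
  induction n with
  | zero => intro l h; omega
  | succ n ih =>
    intro l h
    rw [phiAux_succ, sweedler_mono]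
    apply Finset.sum_eq_zero
    intro i hi
    rw [Finset.mem_range] at hi
    rw [ih _ (by rw [length_take_lt hi]; omega), zero_mul, zero_mul]

lemma sweedler_phiAux_vanish (H : Alg → Alg) (n : ℕ) (l : List Bool) (h : l.length ≤ n) :
    sweedler (phiAux n) H (monoOf l) = 0 := by
  rw [sweedler_mono]
  apply Finset.sum_eq_zero
  intro i hi
  rw [Finset.mem_range] at hi
  rw [phiAux_mono_vanish _ _ (by rw [length_take_lt hi]; omega), zero_mul, zero_mul]

-- ============ Fsum / Bsum ============

def Fsum (l : List Bool) : Alg := ∑ k ∈ Finset.range (l.length + 1), phiAux k (monoOf l)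

def Bsum (l : List Bool) : Alg :=
  ∑ k ∈ Finset.range (l.length + 1), sweedler (phiAux k) etabOp (monoOf l)

lemma Fsum_nil : Fsum [] = 1 := by
  rw [Fsum]
  simp only [List.length_nil, zero_add, Finset.range_one, Finset.sum_singleton]
  rw [phiAux_zero, kappa_one]

lemma Bsum_nil : Bsum [] = 0 := by
  rw [Bsum]
  simp only [List.length_nil, zero_add, Finset.range_one, Finset.sum_singleton]
  rw [sweedler_mono]
  simp

lemma sweedler_mono_append (F G : Alg → Alg) (u : List Bool) (x : Bool) :
    sweedler F G (monoOf (u ++ [x])) =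
      (∑ i ∈ Finset.range u.length,
        F (monoOf (u.take i)) * vb * G (monoOf (u.drop (i+1) ++ [x])))
      + F (monoOf u) * vb * G (monoOf []) := by
  rw [sweedler_mono]
  rw [List.length_append, List.length_singleton, Finset.sum_range_succ]
  congr 1
  · apply Finset.sum_congr rfl
    intro i hi
    rw [Finset.mem_range] at hi
    rw [List.take_append_of_le_length (le_of_lt hi), List.drop_append_of_le_length hi]
  · rw [List.take_left, List.drop_eq_nil_of_le (by simp)]

lemma two_smul_int (x : Alg) : (2:ℤ) • x = x + x := two_zsmul x

lemma R3 (u : List Bool) : Bsum (u ++ [false]) = (2:ℤ) • (Fsum u * vb) := by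
  rw [Bsum, List.length_append, List.length_singleton]
  have step : ∀ k, sweedler (phiAux k) etabOp (monoOf (u ++ [false]))
      = (2:ℤ) • (phiAux k (monoOf u) * vb) := by
    intro k
    rw [sweedler_mono_append]
    have h1 : ∀ i ∈ Finset.range u.length,
        phiAux k (monoOf (u.take i)) * vb * etabOp (monoOf (u.drop (i+1) ++ [false])) = 0 := by
      intro i _
      rw [etabOp_mono, etab_append_a, mul_zero]
    rw [Finset.sum_eq_zero h1, zero_add, etabOp_mono, etab_nil, mul_smul_comm, mul_one]
  rw [Finset.sum_congr rfl (fun k _ => step k), ← Finset.smul_sum, ← Finset.sum_mul]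
  rw [Finset.sum_range_succ, phiAux_mono_vanish _ _ (by omega), add_zero]
  rfl

lemma R1 (u : List Bool) : Fsum (u ++ [false]) = Fsum u * (va + vb) := by
  rw [Fsum, List.length_append, List.length_singleton, Finset.sum_range_succ']
  have step : ∀ n, phiAux (n+1) (monoOf (u ++ [false]))
      = phiAux (n+1) (monoOf u) * (va - vb) + (2:ℤ) • (phiAux n (monoOf u) * vb) := by
    intro n
    rw [phiAux_succ, sweedler_mono_append]
    congr 1
    · rw [phiAux_succ, sweedler_mono, Finset.sum_mul]
      apply Finset.sum_congr rfl
      intro i _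
      rw [etaOp_mono, etaOp_mono, eta_append_a, mul_assoc, mul_assoc, mul_assoc]
    · rw [etaOp_mono, eta_nil, mul_smul_comm, mul_one]
  rw [Finset.sum_congr rfl (fun n _ => step n), Finset.sum_add_distrib, ← Finset.smul_sum]
  have h0 : phiAux 0 (monoOf (u ++ [false])) = phiAux 0 (monoOf u) * (va - vb) := by
    rw [phiAux_zero, phiAux_zero, kappa_mono_append]; simp
  have hF : (∑ x ∈ Finset.range (u.length + 1), phiAux x (monoOf u)) = Fsum u := rfl
  have hF2 : (∑ x ∈ Finset.range (u.length + 1 + 1), phiAux x (monoOf u)) = Fsum u := by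
    rw [Finset.sum_range_succ, phiAux_mono_vanish _ _ (by omega), add_zero, hF]
  have hcomb : (∑ i ∈ Finset.range (u.length + 1), phiAux (i+1) (monoOf u))
      + phiAux 0 (monoOf u) = Fsum u := by
    rw [← Finset.sum_range_succ' (fun k => phiAux k (monoOf u)) (u.length + 1)]
    exact hF2
  rw [h0, ← Finset.sum_mul, ← Finset.sum_mul, add_right_comm, ← add_mul, hcomb, hF, two_smul_int]
  noncomm_ring

lemma R2 (u : List Bool) :
    Fsum (u ++ [true]) = (2:ℤ) • (Fsum u * vb) + Bsum u * (va - vb) := by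
  rw [Fsum, List.length_append, List.length_singleton, Finset.sum_range_succ']
  have step : ∀ n, phiAux (n+1) (monoOf (u ++ [true]))
      = sweedler (phiAux n) etabOp (monoOf u) * (va - vb)
        + (2:ℤ) • (phiAux n (monoOf u) * vb) := by
    intro n
    rw [phiAux_succ, sweedler_mono_append]
    congr 1
    · rw [sweedler_mono, Finset.sum_mul]
      apply Finset.sum_congr rfl
      intro i _
      rw [etaOp_mono, etabOp_mono, eta_append_b, mul_assoc, mul_assoc, mul_assoc]
    · rw [etaOp_mono, eta_nil, mul_smul_comm, mul_one]
  rw [Finset.sum_congr rfl (fun n _ => step n), Finset.sum_add_distrib, ← Finset.smul_sum,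
    ← Finset.sum_mul]
  have h0 : phiAux 0 (monoOf (u ++ [true])) = 0 := by
    rw [phiAux_zero, kappa_mono_append]; simp
  have hF : (∑ x ∈ Finset.range (u.length + 1), phiAux x (monoOf u)) = Fsum u := rfl
  have hB : (∑ i ∈ Finset.range (u.length + 1), sweedler (phiAux i) etabOp (monoOf u))
      = Bsum u := rfl
  rw [h0, add_zero, ← Finset.sum_mul, hF, hB, add_comm]

lemma R4 (u : List Bool) : Bsum (u ++ [true]) = Fsum (u ++ [true]) := by
  rw [Bsum, List.length_append, List.length_singleton]
  have step : ∀ k, sweedler (phiAux k) etabOp (monoOf (u ++ [true]))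
      = sweedler (phiAux k) etabOp (monoOf u) * (va - vb)
        + (2:ℤ) • (phiAux k (monoOf u) * vb) := by
    intro k
    rw [sweedler_mono_append]
    congr 1
    · rw [sweedler_mono, Finset.sum_mul]
      apply Finset.sum_congr rfl
      intro i _
      rw [etabOp_mono, etabOp_mono, etab_append_b, mul_assoc, mul_assoc, mul_assoc]
    · rw [etabOp_mono, etab_nil, mul_smul_comm, mul_one]
  rw [Finset.sum_congr rfl (fun k _ => step k), Finset.sum_add_distrib, ← Finset.smul_sum,
    ← Finset.sum_mul, ← Finset.sum_mul]
  rw [Finset.sum_range_succ (fun k => sweedler (phiAux k) etabOp (monoOf u)),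
    sweedler_phiAux_vanish _ _ _ (by omega), add_zero]
  rw [Finset.sum_range_succ (fun k => phiAux k (monoOf u)),
    phiAux_mono_vanish _ _ (by omega), add_zero]
  have hF : (∑ x ∈ Finset.range (u.length + 1), phiAux x (monoOf u)) = Fsum u := rfl
  have hB : (∑ x ∈ Finset.range (u.length + 1), sweedler (phiAux x) etabOp (monoOf u))
      = Bsum u := rfl
  rw [hF, hB, R2, add_comm]

-- ============ phi on monomials, Lsum, Gm ============

lemma maxLen_mono (l : List Bool) : maxLen (monoOf l) = l.length := by
  rw [maxLen, toF_mono, Finsupp.support_single_ne_zero _ (one_ne_zero)]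
  simp [toList_ofList]

lemma phi_mono (l : List Bool) : phi (monoOf l) = Fsum l := by
  rw [phi, maxLen_mono]; rfl

def Lsum (u : List Bool) : Alg := sweedler phi lambdabar (monoOf u) * (va - vb)

lemma Lsum_nil : Lsum [] = 0 := by
  rw [Lsum, sweedler_mono]; simp

lemma Lsum_append_a (u : List Bool) :
    Lsum (u ++ [false]) = Fsum u * vb * (va - vb) := by
  rw [Lsum, sweedler_mono_append]
  have h1 : ∀ i ∈ Finset.range u.length,
      phi (monoOf (u.take i)) * vb * lambdabar (monoOf (u.drop (i+1) ++ [false])) = 0 := by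
    intro i _
    rw [lambdabar_mono_append]
    simp
  rw [Finset.sum_eq_zero h1, zero_add, lambdabar_one, mul_one, phi_mono]

lemma Lsum_append_b (u : List Bool) :
    Lsum (u ++ [true]) = Lsum u * (va - vb) + Fsum u * vb * (va - vb) := by
  rw [Lsum, sweedler_mono_append, lambdabar_one, mul_one, add_mul, phi_mono, Lsum]
  congr 1
  rw [sweedler_mono, Finset.sum_mul, Finset.sum_mul, Finset.sum_mul]
  apply Finset.sum_congr rfl
  intro i _
  rw [lambdabar_mono_append]
  simp only [if_true]
  rw [← mul_assoc]

def Gm (u : List Bool) : Alg := Fsum u * vb + Lsum u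

-- ============ omega ============

lemma omega_ft (rest : List Bool) :
    omegaList (false :: true :: rest) = ((2:ℤ) • (va * vb + vb * va)) * omegaList rest := rfl

lemma omega_t (rest : List Bool) :
    omegaList (true :: rest) = (va + vb) * omegaList rest := rfl

lemma omega_ff (rest : List Bool) :
    omegaList (false :: false :: rest) = (va + vb) * omegaList (false :: rest) := rfl

lemma omega_f1 : omegaList [false] = (va + vb) * 1 := rfl

lemma omega_nil : omegaList [] = 1 := rfl

lemma omega_append_a : ∀ (w : List Bool), omegaList (w ++ [false]) = omegaList w * (va + vb) := by
  suffices H : ∀ n (w : List Bool), w.length ≤ n →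
      omegaList (w ++ [false]) = omegaList w * (va + vb) by
    exact fun w => H w.length w le_rfl
  intro n
  induction n with
  | zero =>
    intro w hw
    rw [List.length_eq_zero_iff.mp (Nat.le_zero.mp hw)]
    rw [show omegaList ([] ++ [false]) = (va + vb) * 1 from rfl, omega_nil, mul_one, one_mul]
  | succ n ih =>
    intro w hw
    match w with
    | [] =>
      rw [show omegaList ([] ++ [false]) = (va + vb) * 1 from rfl, omega_nil, mul_one, one_mul]
    | true :: r =>
      rw [show (true :: r) ++ [false] = true :: (r ++ [false]) from rfl, omega_t, omega_t,
        ih r (by simp at hw; omega), mul_assoc]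
    | false :: true :: r =>
      rw [show (false :: true :: r) ++ [false] = false :: true :: (r ++ [false]) from rfl,
        omega_ft, omega_ft, ih r (by simp at hw; omega), mul_assoc]
    | [false] =>
      rw [show ([false] ++ [false]) = [false, false] from rfl, omega_ff, omega_f1, mul_assoc,
        one_mul, mul_one]
    | false :: false :: r =>
      rw [show (false :: false :: r) ++ [false] = false :: false :: (r ++ [false]) from rfl,
        omega_ff, omega_ff,
        show false :: (r ++ [false]) = (false :: r) ++ [false] from rfl,
        ih (false :: r) (by simp at hw ⊢; omega), mul_assoc]

lemma omega_append_ab : ∀ (w : List Bool),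
    omegaList (w ++ [false, true]) = omegaList w * ((2:ℤ) • (va * vb + vb * va)) := by
  suffices H : ∀ n (w : List Bool), w.length ≤ n →
      omegaList (w ++ [false, true]) = omegaList w * ((2:ℤ) • (va * vb + vb * va)) by
    exact fun w => H w.length w le_rfl
  intro n
  induction n with
  | zero =>
    intro w hw
    rw [List.length_eq_zero_iff.mp (Nat.le_zero.mp hw)]
    rw [show omegaList ([] ++ [false, true]) = ((2:ℤ) • (va * vb + vb * va)) * 1 from rfl,
      omega_nil, mul_one, one_mul]
  | succ n ih =>
    intro w hw
    match w with
    | [] =>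
      rw [show omegaList ([] ++ [false, true]) = ((2:ℤ) • (va * vb + vb * va)) * 1 from rfl,
        omega_nil, mul_one, one_mul]
    | true :: r =>
      rw [show (true :: r) ++ [false, true] = true :: (r ++ [false, true]) from rfl, omega_t,
        omega_t, ih r (by simp at hw; omega), mul_assoc]
    | false :: true :: r =>
      rw [show (false :: true :: r) ++ [false, true] = false :: true :: (r ++ [false, true])
        from rfl, omega_ft, omega_ft, ih r (by simp at hw; omega), mul_assoc]
    | [false] =>
      rw [show ([false] ++ [false, true]) = [false, false, true] from rfl, omega_ff,
        show omegaList [false, true] = ((2:ℤ) • (va * vb + vb * va)) * 1 from rfl, omega_f1,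
        mul_assoc, one_mul, mul_one]
    | false :: false :: r =>
      rw [show (false :: false :: r) ++ [false, true] = false :: false :: (r ++ [false, true])
        from rfl, omega_ff, omega_ff,
        show false :: (r ++ [false, true]) = (false :: r) ++ [false, true] from rfl,
        ih (false :: r) (by simp at hw ⊢; omega), mul_assoc]

lemma omega_append_bb : ∀ (w : List Bool),
    omegaList ((w ++ [true]) ++ [true]) = omegaList (w ++ [true]) * (va + vb) := by
  suffices H : ∀ n (w : List Bool), w.length ≤ n →
      omegaList ((w ++ [true]) ++ [true]) = omegaList (w ++ [true]) * (va + vb) by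
    exact fun w => H w.length w le_rfl
  intro n
  induction n with
  | zero =>
    intro w hw
    rw [List.length_eq_zero_iff.mp (Nat.le_zero.mp hw)]
    rw [show (([] ++ [true]) ++ [true]) = [true, true] from rfl,
      show ([] ++ [true]) = [true] from rfl, omega_t, omega_t, omega_nil, mul_assoc,
      one_mul, mul_one]
  | succ n ih =>
    intro w hw
    match w with
    | [] =>
      rw [show (([] ++ [true]) ++ [true]) = [true, true] from rfl,
        show ([] ++ [true]) = [true] from rfl, omega_t, omega_t, omega_nil, mul_assoc,
        one_mul, mul_one]
    | true :: r =>
      rw [show ((true :: r) ++ [true]) ++ [true] = true :: ((r ++ [true]) ++ [true]) from rfl,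
        show (true :: r) ++ [true] = true :: (r ++ [true]) from rfl, omega_t, omega_t,
        ih r (by simp at hw; omega), mul_assoc]
    | false :: true :: r =>
      rw [show ((false :: true :: r) ++ [true]) ++ [true]
          = false :: true :: ((r ++ [true]) ++ [true]) from rfl,
        show (false :: true :: r) ++ [true] = false :: true :: (r ++ [true]) from rfl,
        omega_ft, omega_ft, ih r (by simp at hw; omega), mul_assoc]
    | [false] =>
      rw [show (([false] ++ [true]) ++ [true]) = [false, true, true] from rfl,
        show ([false] ++ [true]) = [false, true] from rfl, omega_ft, omega_ft, omega_t,
        omega_nil, mul_assoc, one_mul, mul_one]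
    | false :: false :: r =>
      rw [show ((false :: false :: r) ++ [true]) ++ [true]
          = false :: false :: (((r ++ [true])) ++ [true]) from rfl,
        show (false :: false :: r) ++ [true] = false :: false :: (r ++ [true]) from rfl,
        omega_ff]
      rw [show false :: ((r ++ [true]) ++ [true]) = ((false :: r) ++ [true]) ++ [true] from rfl]
      rw [ih (false :: r) (by simp at hw ⊢; omega)]
      rw [show (false :: r) ++ [true] = false :: (r ++ [true]) from rfl, omega_ff, mul_assoc]

-- ============ ring identities ============

lemma ring1 (F : Alg) :
    (2:ℤ) • (F * (va + vb) * vb) + ((2:ℤ) • (F * vb)) * (va - vb)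
      = F * ((2:ℤ) • (va * vb + vb * va)) := by
  rw [two_smul_int, two_smul_int, two_smul_int]
  noncomm_ring

lemma ring2 (F B : Alg) (h : B = F) :
    (2:ℤ) • (F * vb) + B * (va - vb) = F * (va + vb) := by
  rw [h, two_smul_int]
  noncomm_ring

lemma ring3 (X F L : Alg) (h : (2:ℤ) • (F * vb + L) = X) :
    (2:ℤ) • (X * vb + (L * (va - vb) + F * vb * (va - vb))) = X * (va + vb) := by
  rw [← h, two_smul_int, two_smul_int]
  noncomm_ring

lemma ring4 (F : Alg) :
    (2:ℤ) • (F * (va + vb) * vb + F * vb * (va - vb)) = F * ((2:ℤ) • (va * vb + vb * va)) := by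
  rw [two_smul_int, two_smul_int]
  noncomm_ring

-- ============ main induction ============

lemma base_case :
    Fsum [false] = omegaList [false] ∧ (2:ℤ) • Gm [false] = omegaList [false, true] := by
  have h1 : Fsum [false] = 1 * (va + vb) := by
    rw [show ([false] : List Bool) = [] ++ [false] from rfl, R1, Fsum_nil]
  have h2 : Lsum [false] = 1 * vb * (va - vb) := by
    rw [show ([false] : List Bool) = [] ++ [false] from rfl, Lsum_append_a, Fsum_nil]
  have h3 : omegaList [false] = (va + vb) * 1 := rfl
  have h4 : omegaList [false, true] = ((2:ℤ) • (va * vb + vb * va)) * 1 := rfl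
  constructor
  · rw [h1, h3, one_mul, mul_one]
  · rw [Gm, h1, h2, h4]
    simp only [two_zsmul]
    noncomm_ring

lemma main_ind : ∀ (l : List Bool),
    Fsum (false :: l) = omegaList (false :: l) ∧
    (2:ℤ) • Gm (false :: l) = omegaList ((false :: l) ++ [true]) := by
  suffices H : ∀ n (l : List Bool), l.length ≤ n →
      Fsum (false :: l) = omegaList (false :: l) ∧
      (2:ℤ) • Gm (false :: l) = omegaList ((false :: l) ++ [true]) by
    exact fun l => H l.length l le_rfl
  intro n
  induction n with
  | zero =>
    intro l hl
    rw [List.length_eq_zero_iff.mp (Nat.le_zero.mp hl)]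
    exact base_case
  | succ n ih =>
    intro l hl
    rcases List.eq_nil_or_concat l with rfl | ⟨l', x, rfl⟩
    · exact base_case
    · simp only [List.concat_eq_append] at hl ⊢
      have hl' : l'.length ≤ n := by simp at hl; omega
      have hcons : false :: (l' ++ [x]) = (false :: l') ++ [x] := rfl
      rw [hcons]
      cases x with
      | false =>
        have hF : Fsum ((false :: l') ++ [false]) = omegaList ((false :: l') ++ [false]) := by
          rw [R1, (ih l' hl').1, omega_append_a]
        refine ⟨hF, ?_⟩
        rw [Gm, R1, Lsum_append_a,
          show ((false :: l') ++ [false]) ++ [true] = (false :: l') ++ [false, true] by simp,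
          omega_append_ab, ← (ih l' hl').1]
        simp only [two_zsmul]
        noncomm_ring
      | true =>
        have hF : Fsum ((false :: l') ++ [true]) = omegaList ((false :: l') ++ [true]) := by
          rcases List.eq_nil_or_concat l' with rfl | ⟨l'', y, rfl⟩
          · rw [R2, show (false :: ([] : List Bool)) = [] ++ [false] from rfl, R1, R3, Fsum_nil,
              show ((([] : List Bool) ++ [false]) ++ [true]) = [] ++ [false, true] by simp,
              omega_append_ab, omega_nil]
            simp only [two_zsmul]
            noncomm_ring
          · simp only [List.concat_eq_append] at hl hl' ⊢
            cases y with
            | false =>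
              have h'' : l''.length ≤ n := by simp at hl'; omega
              rw [R2, show (false :: (l'' ++ [false])) = (false :: l'') ++ [false] from rfl,
                R1, R3, (ih l'' h'').1,
                show (((false :: l'') ++ [false]) ++ [true]) = (false :: l'') ++ [false, true]
                  by simp,
                omega_append_ab]
              simp only [two_zsmul]
              noncomm_ring
            | true =>
              have hihF := (ih (l'' ++ [true]) hl').1
              have hR4 : Bsum (false :: (l'' ++ [true])) = Fsum (false :: (l'' ++ [true])) :=
                R4 (false :: l'')
              have hbb : omegaList ((false :: (l'' ++ [true])) ++ [true])
                  = omegaList (false :: (l'' ++ [true])) * (va + vb) :=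
                omega_append_bb (false :: l'')
              rw [R2, ring2 _ _ hR4, hihF, hbb]
        refine ⟨hF, ?_⟩
        have hG := (ih l' hl').2
        rw [Gm] at hG
        rw [Gm, Lsum_append_b, hF, ring3 _ _ _ hG, omega_append_bb]

-- ============ linearity ============

def genOp (h : FreeMonoid Bool → Alg) (x : Alg) : Alg := (toF x).sum fun w c => c • h w

lemma genOp_add (h : FreeMonoid Bool → Alg) (x y : Alg) :
    genOp h (x + y) = genOp h x + genOp h y := by
  unfold genOp
  exact Finsupp.sum_add_index' (fun a => zero_smul ℤ (h a)) (fun a b c => add_smul b c (h a))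

lemma genOp_smul (h : FreeMonoid Bool → Alg) (c : ℤ) (x : Alg) :
    genOp h (c • x) = c • genOp h x := by
  unfold genOp
  rw [show toF (c • x) = c • toF x from rfl,
    Finsupp.sum_smul_index' (fun i => zero_smul ℤ (h i)), Finsupp.smul_sum]
  exact Finsupp.sum_congr fun w _ => (mul_smul c _ (h w))

lemma genOp_zero (h : FreeMonoid Bool → Alg) : genOp h 0 = 0 := Finsupp.sum_zero_index

lemma genOp_single (h : FreeMonoid Bool → Alg) (w : FreeMonoid Bool) (c : ℤ) :
    genOp h (MonoidAlgebra.single w c) = c • h w :=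
  Finsupp.sum_single_index (zero_smul ℤ (h w))

lemma sweedler_eq_genOp (F G : Alg → Alg) :
    sweedler F G = genOp (fun w =>
      ∑ i ∈ Finset.range (FreeMonoid.toList w).length,
        F (monoOf ((FreeMonoid.toList w).take i)) * vb *
          G (monoOf ((FreeMonoid.toList w).drop (i+1)))) := rfl

lemma omegaOp_eq_genOp : omegaOp = genOp (fun w => omegaList (FreeMonoid.toList w)) := rfl

lemma omegaOp_mono (l : List Bool) : omegaOp (monoOf l) = omegaList l := by
  rw [omegaOp_eq_genOp, monoOf_def, genOp_single, one_smul, toList_ofList]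

lemma maxLen_le_of_mem {x : Alg} {w : FreeMonoid Bool} (hw : w ∈ (toF x).support) :
    (FreeMonoid.toList w).length ≤ maxLen x :=
  Finset.le_sup hw

lemma phiAux_vanish (n : ℕ) (x : Alg) (h : maxLen x < n) : phiAux n x = 0 := by
  cases n with
  | zero => omega
  | succ n =>
    rw [phiAux_succ, sweedler, Finsupp.sum]
    apply Finset.sum_eq_zero
    intro w hw
    have hlen := maxLen_le_of_mem (x := x) hw
    have hz : ∀ i ∈ Finset.range (FreeMonoid.toList w).length,
        phiAux n (monoOf ((FreeMonoid.toList w).take i)) * vb *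
          etaOp (monoOf ((FreeMonoid.toList w).drop (i+1))) = 0 := by
      intro i hi
      rw [Finset.mem_range] at hi
      rw [phiAux_mono_vanish _ _ (by rw [length_take_lt hi]; omega), zero_mul, zero_mul]
    rw [Finset.sum_eq_zero hz, smul_zero]

lemma phiAux_add (n : ℕ) (x y : Alg) : phiAux n (x + y) = phiAux n x + phiAux n y := by
  cases n with
  | zero => exact map_add kappa x y
  | succ n => rw [phiAux_succ, phiAux_succ, phiAux_succ, sweedler_eq_genOp, genOp_add]

lemma phiAux_smul (n : ℕ) (c : ℤ) (x : Alg) : phiAux n (c • x) = c • phiAux n x := by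
  cases n with
  | zero => exact map_zsmul kappa c x
  | succ n => rw [phiAux_succ, phiAux_succ, sweedler_eq_genOp, genOp_smul]

lemma phi_eq_sum (N : ℕ) (x : Alg) (h : maxLen x ≤ N) :
    phi x = ∑ k ∈ Finset.range (N + 1), phiAux k x := by
  rw [phi]
  apply Finset.sum_subset (Finset.range_subset_range.2 (by omega))
  intro k _ hk
  rw [Finset.mem_range] at hk
  exact phiAux_vanish k x (by omega)

lemma phi_add (x y : Alg) : phi (x + y) = phi x + phi y := by
  set N := max (max (maxLen x) (maxLen y)) (maxLen (x + y)) with hN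
  rw [phi_eq_sum N x (by omega), phi_eq_sum N y (by omega), phi_eq_sum N (x + y) (by omega),
    ← Finset.sum_add_distrib]
  exact Finset.sum_congr rfl fun k _ => phiAux_add k x y

lemma maxLen_smul_le (c : ℤ) (x : Alg) : maxLen (c • x) ≤ maxLen x := by
  apply Finset.sup_mono
  exact Finsupp.support_smul

lemma phi_smul (c : ℤ) (x : Alg) : phi (c • x) = c • phi x := by
  rw [phi_eq_sum (maxLen x) (c • x) (maxLen_smul_le c x), phi, Finset.smul_sum]
  exact Finset.sum_congr rfl fun k _ => phiAux_smul k c x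

lemma phi_zero : phi 0 = 0 := by
  have : phi (0 : Alg) = phi ((0:ℤ) • (0 : Alg)) := by rw [zero_smul]
  rw [this, phi_smul, zero_smul]

lemma Gop_mono (u : List Bool) : Gop (monoOf u) = Gm u := by
  rw [Gop, phi_mono, Gm, Lsum]

lemma Gop_add (x y : Alg) : Gop (x + y) = Gop x + Gop y := by
  rw [Gop, Gop, Gop, phi_add, sweedler_eq_genOp, genOp_add, add_mul, add_mul]
  noncomm_ring

lemma Gop_smul (c : ℤ) (x : Alg) : Gop (c • x) = c • Gop x := by
  rw [Gop, Gop, phi_smul, sweedler_eq_genOp, genOp_smul, smul_mul_assoc, smul_mul_assoc,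
    smul_add]

lemma Gop_zero : Gop 0 = 0 := by
  have : Gop (0 : Alg) = Gop ((0:ℤ) • (0 : Alg)) := by rw [zero_smul]
  rw [this, Gop_smul, zero_smul]

-- ============ final assembly ============

lemma one_eq_monoOf_nil : (1 : Alg) = monoOf [] := rfl

lemma va_eq : va = monoOf [false] := rfl
lemma vb_eq : vb = monoOf [true] := rfl

theorem G_eval' :
    Gop 1 = vb ∧ ∀ v : Alg, (2 : ℤ) • Gop (va * v) = omegaOp (va * v * vb) := by
  constructor
  · rw [one_eq_monoOf_nil, Gop_mono, Gm, Fsum_nil, Lsum_nil, one_mul, add_zero]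
  · intro v
    induction v using MonoidAlgebra.induction_on with
    | of g =>
      have h1 : va * MonoidAlgebra.of ℤ (FreeMonoid Bool) g
          = monoOf (false :: FreeMonoid.toList g) := by
        rw [va_eq, show MonoidAlgebra.of ℤ (FreeMonoid Bool) g
            = monoOf (FreeMonoid.toList g) from rfl, ← monoOf_append]
        rfl
      rw [h1, Gop_mono, vb_eq, ← monoOf_append, omegaOp_mono]
      exact (main_ind (FreeMonoid.toList g)).2
    | add f g hf hg =>
      rw [mul_add, add_mul, Gop_add, omegaOp_eq_genOp, genOp_add, ← omegaOp_eq_genOp, smul_add,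
        hf, hg]
    | smul r f hf =>
      rw [mul_smul_comm, smul_mul_assoc, Gop_smul, omegaOp_eq_genOp, genOp_smul,
        ← omegaOp_eq_genOp, smul_comm, hf]

end

/-- `G(1) = b` and `G(a·v) = (1/2)·ω(a·v·b)`, the latter stated
integrally as `2·G(a·v) = ω(a·v·b)`. -/
theorem G_eval :
    Gop 1 = vb ∧ ∀ v : Alg, (2 : ℤ) • Gop (va * v) = omegaOp (va * v * vb) := by
  exact ⟨G_eval'.1, G_eval'.2⟩
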